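/- Let R be a commutative Noetherian domain of prime characteristic p > 0, let I be an ideal of R, let s > t ≥ 1 be real numbers, and suppose z belongs to the weak t-closure of I but not to the weak s-closure of I. Let S = R[X] be a polynomial ring over R and J = IS. Then for every n ∈ ℕ, z·X^n does not belong to the weak s-closure of J; consequently the S-module (weak t-closure of J)/(weak s-closure of J) has infinite length. -/

import Mathlib

open Pointwise

/-- `R°`: the set of elements of `R` not contained in any minimal prime of `R`. -/
def RCirc (R : Type*) [CommRing R] : Set R :=
  {c | ∀ P ∈ minimalPrimes R, c ∉ P}

/-- The `q`-th Frobenius power `I^[q]` of an ideal `I`, generated by `q`-th powers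
of elements of `I`. -/
def frobPow {R : Type*} [CommRing R] (I : Ideal R) (q : ℕ) : Ideal R :=
  Ideal.span ((fun f => f ^ q) '' (I : Set R))

/-- The `(s,q)` mixed power `I^(s,q) = I^⌈sq⌉ + I^[q]`. -/
noncomputable def mixedPow {R : Type*} [CommRing R] (I : Ideal R) (s : ℝ) (q : ℕ) : Ideal R :=
  I ^ ⌈s * (q : ℝ)⌉₊ + frobPow I q

/-- The weak `s`-closure of `I`: elements `x` such that there is `c ∈ R°` with
`c·x^q ∈ I^(s,q)` for all sufficiently large powers `q = p^e` of `p`. -/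
def weakCl {R : Type*} [CommRing R] (p : ℕ) (I : Ideal R) (s : ℝ) : Set R :=
  {x | ∃ c ∈ RCirc R, ∃ N : ℕ, ∀ e : ℕ, N ≤ e → c * x ^ p ^ e ∈ mixedPow I s (p ^ e)}

/-- The tight closure `I*` of `I`. -/
def tightCl {R : Type*} [CommRing R] (p : ℕ) (I : Ideal R) : Set R :=
  {x | ∃ c ∈ RCirc R, ∃ N : ℕ, ∀ e : ℕ, N ≤ e → c * x ^ p ^ e ∈ frobPow I (p ^ e)}

/-- The integral closure of `I`: elements `x` such that there is `c ∈ R°` with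
`c·x^n ∈ I^n` for all sufficiently large `n`. -/
def intCl {R : Type*} [CommRing R] (I : Ideal R) : Set R :=
  {x | ∃ c ∈ RCirc R, ∃ N : ℕ, ∀ n : ℕ, N ≤ n → c * x ^ n ∈ I ^ n}

/-- The `α`-th rational power `I_α` of `I`, for rational `α = a/b ≥ 0`:
elements `x` with `x^b` in the integral closure of `I^a`. -/
noncomputable def ratPow {R : Type*} [CommRing R] (I : Ideal R) (α : ℚ) : Set R :=
  {x | x ^ α.den ∈ intCl (I ^ α.num.toNat)}

/-- `μ(I)`: the minimal number of generators of `I`. -/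
noncomputable def mu {R : Type*} [CommRing R] (I : Ideal R) : ℕ :=
  sInf {m : ℕ | ∃ s : Finset R, s.card = m ∧ Ideal.span (s : Set R) = I}

/-- An ideal has positive height if it is not contained in any minimal prime. -/
def PosHeight {R : Type*} [CommRing R] (I : Ideal R) : Prop :=
  ∀ P ∈ minimalPrimes R, ¬ I ≤ P


open Pointwise Polynomial

section Aux

variable {R : Type*} [CommRing R]

private lemma minimalPrimes_domain [IsDomain R] : minimalPrimes R = {⊥} := by
  haveI := Ideal.bot_prime (α := R)
  exact Ideal.minimalPrimes_eq_subsingleton_self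

private lemma bot_mem_minimalPrimes [IsDomain R] : (⊥ : Ideal R) ∈ minimalPrimes R := by
  rw [minimalPrimes_domain]; rfl

private lemma rcirc_ne_zero [IsDomain R] {c : R} (hc : c ∈ RCirc R) : c ≠ 0 := by
  intro h
  exact hc ⊥ bot_mem_minimalPrimes (h ▸ Ideal.zero_mem ⊥)

private lemma rcirc_of_ne_zero [IsDomain R] {c : R} (hc : c ≠ 0) : c ∈ RCirc R := by
  intro P hP
  rw [minimalPrimes_domain, Set.mem_singleton_iff] at hP
  subst hP
  simpa [Ideal.mem_bot] using hc

private lemma frobPow_map_le (I : Ideal R) (q : ℕ) :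
    (frobPow I q).map (C : R →+* R[X]) ≤ frobPow (I.map (C : R →+* R[X])) q := by
  rw [frobPow, Ideal.map_span, Ideal.span_le]
  rintro _ ⟨_, ⟨a, ha, rfl⟩, rfl⟩
  exact Ideal.subset_span ⟨C a, Ideal.mem_map_of_mem _ ha, (map_pow _ _ _).symm⟩

private lemma mixedPow_map_le (I : Ideal R) (s : ℝ) (q : ℕ) :
    (mixedPow I s q).map (C : R →+* R[X]) ≤ mixedPow (I.map (C : R →+* R[X])) s q := by
  rw [mixedPow, mixedPow, Submodule.add_eq_sup, Submodule.add_eq_sup, Ideal.map_sup]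
  exact sup_le_sup (le_of_eq (Ideal.map_pow _ _ _)) (frobPow_map_le I q)

variable (p : ℕ) [Fact p.Prime] [CharP R p]

private lemma frobPow_map_ge (I : Ideal R) (e : ℕ) :
    frobPow (I.map (C : R →+* R[X])) (p ^ e) ≤ (frobPow I (p ^ e)).map (C : R →+* R[X]) := by
  rw [frobPow, Ideal.span_le]
  rintro _ ⟨g, hg, rfl⟩
  simp only [SetLike.mem_coe] at hg ⊢
  rw [Ideal.mem_map_C_iff] at hg
  have hrw : g ^ p ^ e = ∑ i ∈ g.support, (C (g.coeff i) * X ^ i) ^ p ^ e := by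
    conv_lhs => rw [← Polynomial.sum_C_mul_X_pow_eq g]
    rw [Polynomial.sum, sum_pow_char_pow]
  rw [hrw]
  refine Submodule.sum_mem _ fun i _ => ?_
  rw [mul_pow, ← map_pow]
  exact Ideal.mul_mem_right _ _
    (Ideal.mem_map_of_mem _ (Ideal.subset_span ⟨g.coeff i, hg i, rfl⟩))

private lemma coeff_mem_mixedPow (I : Ideal R) (s : ℝ) (e : ℕ) {f : R[X]}
    (hf : f ∈ mixedPow (I.map (C : R →+* R[X])) s (p ^ e)) (k : ℕ) :
    f.coeff k ∈ mixedPow I s (p ^ e) := by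
  have hle : mixedPow (I.map (C : R →+* R[X])) s (p ^ e)
      ≤ (mixedPow I s (p ^ e)).map (C : R →+* R[X]) := by
    rw [mixedPow, mixedPow, Submodule.add_eq_sup, Submodule.add_eq_sup, Ideal.map_sup]
    exact sup_le_sup (le_of_eq (Ideal.map_pow _ _ _).symm) (frobPow_map_ge p I e)
  exact Ideal.mem_map_C_iff.mp (hle hf) k

private lemma key_nonmem [IsDomain R] (I : Ideal R) (s : ℝ) {z : R}
    (hzs : z ∉ weakCl p I s) (n : ℕ) (h : R[X]) :
    C z * X ^ n + X ^ (n + 1) * h ∉ weakCl p (I.map (C : R →+* R[X])) s := by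
  rintro ⟨c, hc, N, hN⟩
  have hc0 : c ≠ 0 := rcirc_ne_zero hc
  set k := c.natTrailingDegree with hk
  have hck : c.coeff k ≠ 0 := by
    rw [hk, ← Polynomial.trailingCoeff]
    exact Polynomial.trailingCoeff_nonzero_iff_nonzero.mpr hc0
  apply hzs
  refine ⟨c.coeff k, rcirc_of_ne_zero hck, max N k, fun e he => ?_⟩
  have hp1 : 1 < p := (Fact.out : p.Prime).one_lt
  have hkq : k < p ^ e :=
    lt_of_lt_of_le (Nat.lt_pow_self hp1 : k < p ^ k) (Nat.pow_le_pow_right (le_of_lt hp1) (le_trans (le_max_right N k) he))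
  set q := p ^ e with hq
  have hmem := hN e (le_trans (le_max_left N k) he)
  have hfq : (C z * X ^ n + X ^ (n + 1) * h) ^ q =
      C (z ^ q) * X ^ (n * q) + X ^ ((n + 1) * q) * h ^ q := by
    rw [hq, add_pow_char_pow, mul_pow, mul_pow, ← C_pow, ← pow_mul, ← pow_mul]
  have hcoeff : (c * (C z * X ^ n + X ^ (n + 1) * h) ^ q).coeff (n * q + k)
      = c.coeff k * z ^ q := by
    rw [hfq, mul_add, Polynomial.coeff_add]
    have h1 : c * (C (z ^ q) * X ^ (n * q)) = c * C (z ^ q) * X ^ (n * q) := by ring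
    have h2 : c * (X ^ ((n + 1) * q) * h ^ q) = c * h ^ q * X ^ ((n + 1) * q) := by ring
    rw [h1, h2, Polynomial.coeff_mul_X_pow', Polynomial.coeff_mul_X_pow',
      if_pos (Nat.le_add_right _ _), Nat.add_sub_cancel_left, Polynomial.coeff_mul_C,
      if_neg, add_zero]
    have : (n + 1) * q = n * q + q := by ring
    omega
  have := coeff_mem_mixedPow p I s e hmem (n * q + k)
  rwa [hcoeff] at this

omit [Fact p.Prime] [CharP R p] in
private lemma mem_weakCl_map [IsDomain R] (I : Ideal R) (t : ℝ) {z : R}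
    (hzt : z ∈ weakCl p I t) (n : ℕ) :
    C z * X ^ n ∈ weakCl p (I.map (C : R →+* R[X])) t := by
  obtain ⟨c, hc, N, hN⟩ := hzt
  refine ⟨C c, rcirc_of_ne_zero (by simpa using rcirc_ne_zero hc), N, fun e he => ?_⟩
  have : C c * (C z * X ^ n) ^ (p ^ e) = C (c * z ^ (p ^ e)) * X ^ (n * p ^ e) := by
    rw [mul_pow, ← C_pow, ← pow_mul, map_mul]; ring
  rw [this]
  exact Ideal.mul_mem_right _ _
    (mixedPow_map_le I t (p ^ e) (Ideal.mem_map_of_mem _ (hN e he)))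

end Aux


/-- if `R` is a Noetherian domain of characteristic `p`, `s > t ≥ 1`, and
`z` is in the weak `t`-closure but not the weak `s`-closure of `I`, then in `S = R[X]`
with `J = IS`, no `z·Xⁿ` lies in the weak `s`-closure of `J`; consequently the quotient
(weak `t`-closure of `J`)/(weak `s`-closure of `J`) has infinite length over `S`. -/
theorem stmt11 {R : Type*} [CommRing R] [IsDomain R] [IsNoetherianRing R]
    (p : ℕ) (hp : p.Prime) (hcp : CharP R p)
    (I : Ideal R) (t s : ℝ) (ht : 1 ≤ t) (hts : t < s)
    (z : R) (hzt : z ∈ weakCl p I t) (hzs : z ∉ weakCl p I s) :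
    (∀ n : ℕ, Polynomial.C z * Polynomial.X ^ n ∉
        weakCl p (I.map (Polynomial.C : R →+* Polynomial R)) s) ∧
      ∀ Jt Js : Ideal (Polynomial R),
        (Jt : Set (Polynomial R)) = weakCl p (I.map (Polynomial.C : R →+* Polynomial R)) t →
        (Js : Set (Polynomial R)) = weakCl p (I.map (Polynomial.C : R →+* Polynomial R)) s →
        ¬ IsFiniteLength (Polynomial R)
          (↥Jt ⧸ Submodule.comap Jt.subtype (Js : Submodule (Polynomial R) (Polynomial R))) := by
  haveI := Fact.mk hp
  constructor
  · intro n hn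
    have := key_nonmem p I s hzs n 0
    rw [mul_zero, add_zero] at this
    exact this hn
  · intro Jt Js hJt hJs hfin
    set P := Submodule.comap Jt.subtype (Js : Submodule (Polynomial R) (Polynomial R)) with hP
    have hart : IsArtinian (Polynomial R) (↥Jt ⧸ P) :=
      (isFiniteLength_iff_isNoetherian_isArtinian.mp hfin).2
    set K : ℕ → Submodule (Polynomial R) (↥Jt ⧸ P) := fun n =>
      Submodule.map P.mkQ (Submodule.comap Jt.subtype
        ((Ideal.span {X ^ n} : Ideal (Polynomial R)) :
          Submodule (Polynomial R) (Polynomial R))) with hK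
    have hanti : ∀ a b : ℕ, a ≤ b → K b ≤ K a := by
      intro a b hab
      apply Submodule.map_mono
      apply Submodule.comap_mono
      exact Ideal.span_singleton_le_span_singleton.mpr (pow_dvd_pow X hab)
    obtain ⟨n, hn⟩ := IsArtinian.monotone_stabilizes
      (⟨fun n => OrderDual.toDual (K n), fun a b hab => hanti a b hab⟩ :
        ℕ →o (Submodule (Polynomial R) (↥Jt ⧸ P))ᵒᵈ)
    have heq : K n = K (n + 1) := hn (n + 1) (Nat.le_succ n)
    have hzmem : (C z * X ^ n : Polynomial R) ∈ Jt := by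
      rw [← SetLike.mem_coe, hJt]
      exact mem_weakCl_map p I t hzt n
    have hxK : P.mkQ ⟨C z * X ^ n, hzmem⟩ ∈ K n := by
      refine ⟨⟨C z * X ^ n, hzmem⟩, ?_, rfl⟩
      exact Ideal.mem_span_singleton.mpr ⟨C z, mul_comm _ _⟩
    rw [heq] at hxK
    obtain ⟨y, hy, hyx⟩ := hxK
    have hys : (y : Polynomial R) - C z * X ^ n ∈ Js := by
      have hsub := (Submodule.Quotient.eq P).mp hyx
      rw [hP, Submodule.mem_comap] at hsub
      simpa using hsub
    obtain ⟨g, hg⟩ := Ideal.mem_span_singleton.mp hy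
    have : C z * X ^ n + X ^ (n + 1) * (-g) ∈ weakCl p
        (I.map (Polynomial.C : R →+* Polynomial R)) s := by
      rw [← hJs]
      have hg' : (y : Polynomial R) = X ^ (n + 1) * g := hg
      have : C z * X ^ n + X ^ (n + 1) * (-g) = -((y : Polynomial R) - C z * X ^ n) := by
        rw [hg']; ring
      rw [this]
      exact SetLike.mem_coe.mpr (Js.neg_mem hys)
    exact key_nonmem p I s hzs n (-g) this
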